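/- arXiv:2503.17466 — 2 statements merged into one kernel-verified Lean document; each statement's English description precedes it below -/
import Mathlib

section
/- Let n ≥ 1 and let p : ℤⁿ → ℂ be a symbol of order m for some m ∈ ℝ. Then p(D) is globally hypoelliptic (GH) if and only if there exists r ≥ 0 such that p(D) is GH-r. -/
open scoped BigOperators

/-- `|ξ| = Σⱼ |ξⱼ|`. -/
noncomputable def l1norm {n : ℕ} (ξ : Fin n → ℤ) : ℝ := ∑ j, |(ξ j : ℝ)|

/-- `‖ξ‖² = Σⱼ ξⱼ²`. -/
noncomputable def l2normSq {n : ℕ} (ξ : Fin n → ℤ) : ℝ := ∑ j, ((ξ j : ℝ)) ^ 2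

/-- `u ∈ H^k(𝕋ⁿ)` in terms of its Fourier coefficients. -/
def InSobolev {n : ℕ} (k : ℝ) (u : (Fin n → ℤ) → ℂ) : Prop :=
  Summable fun ξ : Fin n → ℤ => (1 + l2normSq ξ) ^ k * ‖u ξ‖ ^ 2

/-- Polynomial growth of Fourier coefficients (a distribution on `𝕋ⁿ`). -/
def PolyGrowth {n : ℕ} (u : (Fin n → ℤ) → ℂ) : Prop :=
  ∃ C N : ℝ, 0 < C ∧ 0 < N ∧
    ∀ ξ, ‖u ξ‖ ≤ C * (1 + Real.sqrt (l2normSq ξ)) ^ N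

/-- Rapidly decreasing Fourier coefficients (a smooth function on `𝕋ⁿ`). -/
def RapidDecay {n : ℕ} (v : (Fin n → ℤ) → ℂ) : Prop :=
  ∀ N : ℝ, 0 < N → ∃ C : ℝ, 0 < C ∧
    ∀ ξ, ‖v ξ‖ ≤ C * (1 + Real.sqrt (l2normSq ξ)) ^ (-N)

/-- `p` is a symbol of order `m`. -/
def SymbolOrder {n : ℕ} (m : ℝ) (p : (Fin n → ℤ) → ℂ) : Prop :=
  ∃ C : ℝ, 0 < C ∧ ∀ ξ, ‖p ξ‖ ≤ C * (1 + l2normSq ξ) ^ (m / 2)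

/-- `p(D)` is globally hypoelliptic with loss of `r` derivatives (GH-`r`). -/
def GHr {n : ℕ} (m r : ℝ) (p : (Fin n → ℤ) → ℂ) : Prop :=
  ∀ (k : ℝ) (u : (Fin n → ℤ) → ℂ), PolyGrowth u →
    InSobolev k (fun ξ => p ξ * u ξ) → InSobolev (k + m - r) u

/-- `p(D)` is globally solvable with loss of `r` derivatives (GS-`r`). -/
def GSr {n : ℕ} (m r : ℝ) (p : (Fin n → ℤ) → ℂ) : Prop :=
  ∀ (k : ℝ) (f : (Fin n → ℤ) → ℂ), InSobolev k f → (∀ ξ, p ξ = 0 → f ξ = 0) →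
    ∃ u : (Fin n → ℤ) → ℂ, InSobolev (k + m - r) u ∧ ∀ ξ, p ξ * u ξ = f ξ

/-- `p(D)` is globally hypoelliptic (GH). -/
def GloballyHypoelliptic {n : ℕ} (p : (Fin n → ℤ) → ℂ) : Prop :=
  ∀ u : (Fin n → ℤ) → ℂ, PolyGrowth u →
    RapidDecay (fun ξ => p ξ * u ξ) → RapidDecay u

/-! ### Auxiliary lemmas -/

lemma l2_nonneg {n : ℕ} (ξ : Fin n → ℤ) : 0 ≤ l2normSq ξ :=
  Finset.sum_nonneg fun _ _ => sq_nonneg _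

lemma one_le_base {n : ℕ} (ξ : Fin n → ℤ) : (1:ℝ) ≤ 1 + l2normSq ξ := by
  linarith [l2_nonneg ξ]

lemma base_pos {n : ℕ} (ξ : Fin n → ℤ) : (0:ℝ) < 1 + l2normSq ξ :=
  lt_of_lt_of_le one_pos (one_le_base ξ)

lemma one_le_sqbase {n : ℕ} (ξ : Fin n → ℤ) : (1:ℝ) ≤ 1 + Real.sqrt (l2normSq ξ) := by
  have := Real.sqrt_nonneg (l2normSq ξ); linarith

lemma sqbase_pos {n : ℕ} (ξ : Fin n → ℤ) : (0:ℝ) < 1 + Real.sqrt (l2normSq ξ) :=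
  lt_of_lt_of_le one_pos (one_le_sqbase ξ)

lemma sqbase_sq {n : ℕ} (ξ : Fin n → ℤ) :
    1 + l2normSq ξ ≤ (1 + Real.sqrt (l2normSq ξ)) ^ (2:ℕ) := by
  have h := Real.sq_sqrt (l2_nonneg ξ)
  have h2 := Real.sqrt_nonneg (l2normSq ξ)
  nlinarith

lemma sqbase_le {n : ℕ} (ξ : Fin n → ℤ) :
    1 + Real.sqrt (l2normSq ξ) ≤ 2 * (1 + l2normSq ξ) := by
  have h2 := Real.sqrt_nonneg (l2normSq ξ)
  have hq := l2_nonneg ξ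
  have : Real.sqrt (l2normSq ξ) ≤ 1 + l2normSq ξ := by
    rw [Real.sqrt_le_left (by linarith)]
    nlinarith
  linarith

lemma summable_g : Summable fun k : ℤ => ((1:ℝ) + (k:ℝ)^2)⁻¹ := by
  have h2 : Summable fun k : ℤ => 1 / (k:ℝ)^2 := Real.summable_one_div_int_pow.mpr one_lt_two
  have hind : Summable fun k : ℤ => (if k = (0:ℤ) then (1:ℝ) else 0) := by
    apply summable_of_finite_support
    apply Set.Finite.subset (Set.finite_singleton (0:ℤ))
    intro k hk
    simp only [Function.mem_support, ne_eq, ite_eq_right_iff, not_forall] at hk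
    simpa using hk.1
  refine Summable.of_nonneg_of_le (fun k => by positivity) (fun k => ?_) (hind.add h2)
  by_cases hk : k = 0
  · simp [hk]
  · have h1 : (1:ℝ) ≤ (k:ℝ)^2 := by
      have : (1:ℤ) ≤ k^2 := by have := sq_pos_of_ne_zero hk; omega
      exact_mod_cast this
    simp only [hk, if_false, Pi.add_apply, zero_add]
    rw [one_div]
    exact inv_anti₀ (by linarith) (by linarith)

lemma summable_prod_g' (g : ℤ → ℝ) (hg : Summable g) (hg0 : 0 ≤ g) (n : ℕ) :
    Summable fun ξ : Fin n → ℤ => ∏ j, g (ξ j) := by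
  induction n with
  | zero => exact summable_of_finite_support (Set.toFinite _)
  | succ n ih =>
    have hih' : 0 ≤ (fun ξ : Fin n → ℤ => ∏ j, g (ξ j)) :=
      fun ξ => Finset.prod_nonneg fun j _ => hg0 _
    have h := Summable.mul_of_nonneg hg ih hg0 hih'
    rw [← (Fin.consEquiv (fun _ : Fin (n+1) => ℤ)).summable_iff]
    refine h.congr fun x => ?_
    simp [Fin.consEquiv, Fin.prod_univ_succ]

lemma summable_base {n : ℕ} {s : ℝ} (hs : (n:ℝ) ≤ s) :
    Summable fun ξ : Fin n → ℤ => (1 + l2normSq ξ) ^ (-s) := by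
  have hprod := summable_prod_g' (fun k : ℤ => ((1:ℝ) + (k:ℝ)^2)⁻¹) summable_g
    (fun k => by positivity) n
  refine Summable.of_nonneg_of_le (fun ξ => (Real.rpow_pos_of_pos (base_pos ξ) _).le)
    (fun ξ => ?_) hprod
  have h1 : (1 + l2normSq ξ) ^ (-s) ≤ (1 + l2normSq ξ) ^ (-(n:ℝ)) :=
    Real.rpow_le_rpow_of_exponent_le (one_le_base ξ) (by linarith)
  refine h1.trans ?_
  have h2 : (∏ j, ((1:ℝ) + ((ξ j : ℝ))^2)) ≤ (1 + l2normSq ξ) ^ (n:ℕ) := by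
    calc (∏ j, ((1:ℝ) + ((ξ j : ℝ))^2)) ≤ ∏ _j : Fin n, (1 + l2normSq ξ) := by
          refine Finset.prod_le_prod (fun j _ => by positivity) (fun j _ => ?_)
          have : ((ξ j : ℝ))^2 ≤ l2normSq ξ :=
            Finset.single_le_sum (f := fun i => ((ξ i : ℝ))^2) (fun i _ => sq_nonneg _)
              (Finset.mem_univ j)
          linarith
      _ = (1 + l2normSq ξ) ^ (n:ℕ) := by simp
  have h3 : (1 + l2normSq ξ) ^ (-(n:ℝ)) = ((1 + l2normSq ξ) ^ (n:ℕ))⁻¹ := by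
    rw [Real.rpow_neg (base_pos ξ).le, Real.rpow_natCast]
  rw [h3, Finset.prod_inv_distrib]
  exact inv_anti₀ (Finset.prod_pos fun j _ => by positivity) h2

/-- A term of a nonnegative summable family modified off a finite set. -/
lemma summable_off {n : ℕ} {f g : (Fin n → ℤ) → ℝ} (hf0 : ∀ ξ, 0 ≤ f ξ)
    (hg0 : ∀ ξ, 0 ≤ g ξ) {S : Set (Fin n → ℤ)} (hS : S.Finite)
    (hle : ∀ ξ ∉ S, f ξ ≤ g ξ) (hg : Summable g) : Summable f := by
  have hind : Summable (S.indicator f) :=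
    summable_of_finite_support (hS.subset Set.support_indicator_subset)
  refine Summable.of_nonneg_of_le hf0 (fun ξ => ?_) (hg.add hind)
  by_cases hξ : ξ ∈ S
  · simp only [Pi.add_apply, Set.indicator_of_mem hξ]
    linarith [hg0 ξ]
  · simp only [Pi.add_apply, Set.indicator_of_notMem hξ]
    linarith [hle ξ hξ]

lemma insobolev_mono {n : ℕ} {k s : ℝ} {u : (Fin n → ℤ) → ℂ} (h : InSobolev k u)
    (hs : s ≤ k) : InSobolev s u := by
  refine Summable.of_nonneg_of_le
    (fun ξ => mul_nonneg (Real.rpow_nonneg (base_pos ξ).le _) (sq_nonneg _))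
    (fun ξ => ?_) h
  have := Real.rpow_le_rpow_of_exponent_le (one_le_base ξ) hs
  exact mul_le_mul_of_nonneg_right this (sq_nonneg _)

lemma rapid_to_sobolev {n : ℕ} {v : (Fin n → ℤ) → ℂ} (hv : RapidDecay v) (k : ℝ) :
    InSobolev k v := by
  set N : ℝ := max (k + ((n:ℝ)+1)) 1 with hNdef
  have hN0 : (0:ℝ) < N := lt_of_lt_of_le one_pos (le_max_right _ _)
  have hNk : k + ((n:ℝ)+1) ≤ N := le_max_left _ _
  obtain ⟨C, hC, hbound⟩ := hv N hN0
  have hsum : Summable fun ξ : Fin n → ℤ => C^2 * (1 + l2normSq ξ) ^ (-((n:ℝ)+1)) :=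
    (summable_base (by linarith)).mul_left _
  refine Summable.of_nonneg_of_le
    (fun ξ => mul_nonneg (Real.rpow_nonneg (base_pos ξ).le _) (sq_nonneg _))
    (fun ξ => ?_) hsum
  set a : ℝ := 1 + l2normSq ξ with hadef
  set b : ℝ := 1 + Real.sqrt (l2normSq ξ) with hbdef
  have ha1 : (1:ℝ) ≤ a := one_le_base ξ
  have hb1 : (1:ℝ) ≤ b := one_le_sqbase ξ
  have ha0 : (0:ℝ) < a := by linarith
  have hb0 : (0:ℝ) < b := by linarith
  have h1 : ‖v ξ‖ ^ 2 ≤ C^2 * (b ^ (-N))^2 := by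
    have hb := hbound ξ
    calc ‖v ξ‖ ^ 2 ≤ (C * b ^ (-N))^2 :=
          pow_le_pow_left₀ (norm_nonneg _) hb 2
      _ = C^2 * (b ^ (-N))^2 := by ring
  have h2 : (b ^ (-N))^2 = b ^ (-(2*N)) := by
    rw [← Real.rpow_natCast (b ^ (-N)) 2, ← Real.rpow_mul hb0.le]
    congr 1
    push_cast
    ring
  have h3 : b ^ (-(2*N)) ≤ a ^ (-N) := by
    have hab : a ≤ b ^ (2:ℕ) := sqbase_sq ξ
    have hkey : (b^(2:ℕ)) ^ (-N) ≤ a ^ (-N) :=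
      Real.rpow_le_rpow_of_nonpos ha0 hab (by linarith)
    calc b ^ (-(2*N)) = (b^(2:ℕ))^(-N) := by
          rw [← Real.rpow_natCast b 2, ← Real.rpow_mul hb0.le]
          congr 1
          push_cast
          ring
      _ ≤ a ^ (-N) := hkey
  have h4 : ‖v ξ‖ ^ 2 ≤ C^2 * a ^ (-N) := by
    calc ‖v ξ‖ ^ 2 ≤ C^2 * (b ^ (-N))^2 := h1
      _ = C^2 * b ^ (-(2*N)) := by rw [h2]
      _ ≤ C^2 * a ^ (-N) := mul_le_mul_of_nonneg_left h3 (sq_nonneg C)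
  calc a ^ k * ‖v ξ‖ ^ 2 ≤ a ^ k * (C^2 * a ^ (-N)) :=
        mul_le_mul_of_nonneg_left h4 (Real.rpow_nonneg ha0.le _)
    _ = C^2 * (a ^ k * a ^ (-N)) := by ring
    _ = C^2 * a ^ (k - N) := by
        rw [← Real.rpow_add ha0, sub_eq_add_neg]
    _ ≤ C^2 * a ^ (-((n:ℝ)+1)) := by
        apply mul_le_mul_of_nonneg_left _ (sq_nonneg C)
        exact Real.rpow_le_rpow_of_exponent_le ha1 (by linarith)

lemma sobolev_all_to_rapid {n : ℕ} {u : (Fin n → ℤ) → ℂ}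
    (h : ∀ k : ℝ, InSobolev k u) : RapidDecay u := by
  intro N hN
  have hs := h (2*N)
  set T : ℝ := ∑' ξ : Fin n → ℤ, (1 + l2normSq ξ)^(2*N) * ‖u ξ‖^2 with hTdef
  have hT0 : 0 ≤ T :=
    tsum_nonneg fun ξ => mul_nonneg (Real.rpow_nonneg (base_pos ξ).le _) (sq_nonneg _)
  refine ⟨(Real.sqrt T + 1) * 2 ^ N, by positivity, fun ξ => ?_⟩
  set a : ℝ := 1 + l2normSq ξ with hadef
  set b : ℝ := 1 + Real.sqrt (l2normSq ξ) with hbdef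
  have ha1 : (1:ℝ) ≤ a := one_le_base ξ
  have hb1 : (1:ℝ) ≤ b := one_le_sqbase ξ
  have ha0 : (0:ℝ) < a := by linarith
  have hb0 : (0:ℝ) < b := by linarith
  have hterm : a^(2*N) * ‖u ξ‖^2 ≤ T :=
    Summable.le_tsum hs ξ (fun j _ =>
      mul_nonneg (Real.rpow_nonneg (base_pos j).le _) (sq_nonneg _))
  have haN : (0:ℝ) < a ^ (2*N) := Real.rpow_pos_of_pos ha0 _
  have h1 : ‖u ξ‖^2 ≤ T * a^(-(2*N)) := by
    rw [Real.rpow_neg ha0.le]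
    calc ‖u ξ‖^2 = (a^(2*N) * ‖u ξ‖^2) / a^(2*N) := by
          field_simp
      _ ≤ T / a^(2*N) := by gcongr
      _ = T * (a^(2*N))⁻¹ := by ring
  have h2 : ‖u ξ‖ ≤ Real.sqrt T * a^(-N) := by
    have := Real.sqrt_le_sqrt h1
    rw [Real.sqrt_sq (norm_nonneg _)] at this
    refine this.trans ?_
    rw [Real.sqrt_mul hT0]
    apply mul_le_mul_of_nonneg_left _ (Real.sqrt_nonneg T)
    have : a^(-(2*N)) = (a^(-N))^(2:ℕ) := by
      rw [← Real.rpow_natCast (a^(-N)) 2, ← Real.rpow_mul ha0.le]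
      congr 1
      push_cast
      ring
    rw [this, Real.sqrt_sq (Real.rpow_nonneg ha0.le _)]
  have h3 : a^(-N) ≤ 2^N * b^(-N) := by
    have hba : b ≤ 2 * a := sqbase_le ξ
    have hkey : (2*a) ^ (-N) ≤ b ^ (-N) :=
      Real.rpow_le_rpow_of_nonpos hb0 hba (by linarith)
    have hsplit : (2*a)^(-N) = 2^(-N) * a^(-N) :=
      Real.mul_rpow (by norm_num) ha0.le
    rw [hsplit] at hkey
    have h2N : (0:ℝ) < (2:ℝ)^N := Real.rpow_pos_of_pos two_pos _
    have := mul_le_mul_of_nonneg_left hkey h2N.le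
    calc a^(-N) = 2^N * (2^(-N) * a^(-N)) := by
          rw [← mul_assoc, ← Real.rpow_add two_pos]
          simp
      _ ≤ 2^N * b^(-N) := this
  calc ‖u ξ‖ ≤ Real.sqrt T * a^(-N) := h2
    _ ≤ Real.sqrt T * (2^N * b^(-N)) :=
        mul_le_mul_of_nonneg_left h3 (Real.sqrt_nonneg T)
    _ = (Real.sqrt T * 2^N) * b^(-N) := by ring
    _ ≤ ((Real.sqrt T + 1) * 2^N) * b^(-N) := by
        have : (0:ℝ) ≤ b^(-N) := Real.rpow_nonneg hb0.le _
        have h2N : (0:ℝ) ≤ (2:ℝ)^N := (Real.rpow_pos_of_pos two_pos _).le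
        nlinarith [Real.sqrt_nonneg T]

lemma finite_low {n : ℕ} (B : ℝ) : {ξ : Fin n → ℤ | l2normSq ξ ≤ B}.Finite := by
  apply Set.Finite.subset
    (Set.Finite.pi (fun j : Fin n => Set.finite_Icc (-(⌈B⌉:ℤ)) ⌈B⌉))
  intro ξ hξ
  simp only [Set.mem_setOf_eq] at hξ
  simp only [Set.mem_pi, Set.mem_univ, Set.mem_Icc, forall_true_left]
  intro j
  have h1 : ((ξ j:ℝ))^2 ≤ B := by
    have : ((ξ j : ℝ))^2 ≤ l2normSq ξ :=
      Finset.single_le_sum (f := fun i => ((ξ i : ℝ))^2) (fun i _ => sq_nonneg _)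
        (Finset.mem_univ j)
    linarith
  have h2 : ((ξ j)^2 : ℤ) ≤ ⌈B⌉ := by
    have : ((ξ j:ℝ))^2 ≤ (⌈B⌉:ℝ) := h1.trans (Int.le_ceil B)
    exact_mod_cast this
  constructor
  · nlinarith [sq_nonneg (ξ j + 1)]
  · nlinarith [sq_nonneg (ξ j - 1)]

theorem stmt_4 {n : ℕ} (hn : 1 ≤ n) (m : ℝ)
    (p : (Fin n → ℤ) → ℂ) (hp : SymbolOrder m p) :
    GloballyHypoelliptic p ↔ ∃ r : ℝ, 0 ≤ r ∧ GHr m r p := by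
  constructor
  · -- hard direction
    intro H
    -- Step 1: lower bound for |p| outside a finite set
    have claim : ∃ j : ℕ, ∀ ξ : Fin n → ℤ, (j:ℝ) ≤ l2normSq ξ →
        (1 + l2normSq ξ) ^ (-(j:ℝ)) ≤ ‖p ξ‖ := by
      by_contra hc
      push_neg at hc
      choose ζ hζ1 hζ2 using hc
      set u : (Fin n → ℤ) → ℂ := (Set.range ζ).indicator (fun _ => (1:ℂ)) with hudef
      have hu_abs : ∀ ξ, ‖u ξ‖ ≤ 1 := by
        intro ξ
        by_cases h : ξ ∈ Set.range ζ
        · simp [hudef, Set.indicator_of_mem h]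
        · simp [hudef, Set.indicator_of_notMem h]
      have hu_poly : PolyGrowth u := by
        refine ⟨1, 1, one_pos, one_pos, fun ξ => ?_⟩
        rw [one_mul, Real.rpow_one]
        exact (hu_abs ξ).trans (one_le_sqbase ξ)
      have hpu_decay : RapidDecay (fun ξ => p ξ * u ξ) := by
        intro N hN
        set J : ℕ := ⌈N⌉₊ with hJdef
        set D : ℝ := 1 + ∑ j ∈ Finset.range J,
          ‖p (ζ j)‖ * (1 + l2normSq (ζ j)) ^ N with hDdef
        have hD1 : (1:ℝ) ≤ D := by
          have : (0:ℝ) ≤ ∑ j ∈ Finset.range J,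
              ‖p (ζ j)‖ * (1 + l2normSq (ζ j)) ^ N :=
            Finset.sum_nonneg fun j _ =>
              mul_nonneg (norm_nonneg _) (Real.rpow_nonneg (base_pos _).le _)
          linarith
        refine ⟨2^N * D, by positivity, fun ξ => ?_⟩
        have hbp : (0:ℝ) < (1 + Real.sqrt (l2normSq ξ)) ^ (-N) :=
          Real.rpow_pos_of_pos (sqbase_pos ξ) _
        by_cases hmem : ξ ∈ Set.range ζ
        · obtain ⟨j, hj⟩ := hmem
          have hu1 : u ξ = 1 := Set.indicator_of_mem (Set.mem_range.mpr ⟨j, hj⟩) _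
          have habs : ‖p ξ * u ξ‖ = ‖p ξ‖ := by
            rw [hu1, mul_one]
          rw [habs]
          -- key general bound : a^(-N) ≤ 2^N b^(-N)
          have haN2 : (1 + l2normSq ξ) ^ (-N) ≤ 2^N * (1 + Real.sqrt (l2normSq ξ)) ^ (-N) := by
            have hba : 1 + Real.sqrt (l2normSq ξ) ≤ 2 * (1 + l2normSq ξ) := sqbase_le ξ
            have hkey : (2*(1 + l2normSq ξ)) ^ (-N) ≤ (1 + Real.sqrt (l2normSq ξ)) ^ (-N) :=
              Real.rpow_le_rpow_of_nonpos (sqbase_pos ξ) hba (by linarith)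
            have hsplit : (2*(1 + l2normSq ξ))^(-N) = 2^(-N) * (1 + l2normSq ξ)^(-N) :=
              Real.mul_rpow (by norm_num) (base_pos ξ).le
            rw [hsplit] at hkey
            have h2N : (0:ℝ) < (2:ℝ)^N := Real.rpow_pos_of_pos two_pos _
            have := mul_le_mul_of_nonneg_left hkey h2N.le
            calc (1 + l2normSq ξ)^(-N) = 2^N * (2^(-N) * (1 + l2normSq ξ)^(-N)) := by
                  rw [← mul_assoc, ← Real.rpow_add two_pos]; simp
              _ ≤ 2^N * (1 + Real.sqrt (l2normSq ξ))^(-N) := this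
          by_cases hjJ : J ≤ j
          · -- large j : |p ξ| < a^(-j) ≤ a^(-N)
            have h1 : ‖p ξ‖ ≤ (1 + l2normSq ξ) ^ (-(j:ℝ)) := by
              rw [← hj]; exact (hζ2 j).le
            have h2 : (1 + l2normSq ξ) ^ (-(j:ℝ)) ≤ (1 + l2normSq ξ) ^ (-N) := by
              apply Real.rpow_le_rpow_of_exponent_le (one_le_base ξ)
              have : N ≤ (J:ℝ) := Nat.le_ceil N
              have : N ≤ (j:ℝ) := this.trans (by exact_mod_cast hjJ)
              linarith
            calc ‖p ξ‖ ≤ (1 + l2normSq ξ) ^ (-N) := h1.trans h2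
              _ ≤ 2^N * (1 + Real.sqrt (l2normSq ξ)) ^ (-N) := haN2
              _ ≤ 2^N * D * (1 + Real.sqrt (l2normSq ξ)) ^ (-N) := by
                  have h2N : (0:ℝ) < (2:ℝ)^N := Real.rpow_pos_of_pos two_pos _
                  nlinarith [mul_nonneg (mul_nonneg h2N.le hbp.le) (sub_nonneg.mpr hD1)]
          · -- small j : use the constant D
            push_neg at hjJ
            have hterm : ‖p (ζ j)‖ * (1 + l2normSq (ζ j)) ^ N ≤ D := by
              have h := Finset.single_le_sum
                (f := fun i => ‖p (ζ i)‖ * (1 + l2normSq (ζ i)) ^ N)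
                (fun i _ => mul_nonneg (norm_nonneg _)
                  (Real.rpow_nonneg (base_pos _).le _))
                (Finset.mem_range.mpr hjJ)
              have h' : ‖p (ζ j)‖ * (1 + l2normSq (ζ j)) ^ N ≤
                  ∑ i ∈ Finset.range J, ‖p (ζ i)‖ * (1 + l2normSq (ζ i)) ^ N := by
                simpa using h
              rw [hDdef]; linarith
            have haN : (0:ℝ) < (1 + l2normSq ξ) ^ N := Real.rpow_pos_of_pos (base_pos ξ) _
            have h1 : ‖p ξ‖ ≤ D * (1 + l2normSq ξ) ^ (-N) := by
              rw [Real.rpow_neg (base_pos ξ).le]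
              rw [← hj]
              rw [← hj] at haN
              calc ‖p (ζ j)‖
                  = (‖p (ζ j)‖ * (1 + l2normSq (ζ j)) ^ N) *
                    ((1 + l2normSq (ζ j)) ^ N)⁻¹ := by field_simp
                _ ≤ D * ((1 + l2normSq (ζ j)) ^ N)⁻¹ :=
                    mul_le_mul_of_nonneg_right hterm (by positivity)
            calc ‖p ξ‖ ≤ D * (1 + l2normSq ξ) ^ (-N) := h1
              _ ≤ D * (2^N * (1 + Real.sqrt (l2normSq ξ)) ^ (-N)) :=
                  mul_le_mul_of_nonneg_left haN2 (by linarith)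
              _ = 2^N * D * (1 + Real.sqrt (l2normSq ξ)) ^ (-N) := by ring
        · have hu0 : u ξ = 0 := Set.indicator_of_notMem hmem _
          show ‖p ξ * u ξ‖ ≤ 2 ^ N * D * (1 + Real.sqrt (l2normSq ξ)) ^ (-N)
          rw [hu0, mul_zero]
          simp only [norm_zero]
          positivity
      -- contradiction: u would be rapidly decreasing
      have hu_rapid := H u hu_poly hpu_decay
      obtain ⟨C, hC, hb⟩ := hu_rapid 1 one_pos
      set j : ℕ := ⌈C^2⌉₊ + 1 with hjdef
      have hq : (j:ℝ) ≤ l2normSq (ζ j) := hζ1 j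
      have hCj : C^2 < (j:ℝ) := by
        have := Nat.le_ceil (C^2)
        push_cast [hjdef]
        linarith
      have hsq : C < Real.sqrt (l2normSq (ζ j)) := by
        have h1 : C ≤ Real.sqrt (C^2) := by
          rw [Real.sqrt_sq_eq_abs]; exact le_abs_self C
        have h2 : Real.sqrt (C^2) < Real.sqrt (l2normSq (ζ j)) := by
          apply Real.sqrt_lt_sqrt (sq_nonneg C)
          linarith
        linarith
      have huj : ‖u (ζ j)‖ = 1 := by
        have : u (ζ j) = 1 := Set.indicator_of_mem (Set.mem_range.mpr ⟨j, rfl⟩) _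
        rw [this]; simp
      have hcontr := hb (ζ j)
      rw [huj] at hcontr
      have hbpos : (0:ℝ) < 1 + Real.sqrt (l2normSq (ζ j)) := sqbase_pos _
      have : C * (1 + Real.sqrt (l2normSq (ζ j))) ^ (-(1:ℝ)) < 1 := by
        rw [Real.rpow_neg_one]
        rw [mul_inv_lt_iff₀ hbpos]
        linarith
      linarith
    -- Step 2: construct r
    obtain ⟨j₀, hj₀⟩ := claim
    refine ⟨max (m + 2*(j₀:ℝ)) 0, le_max_right _ _, ?_⟩
    intro k u hu hsob
    set r : ℝ := max (m + 2*(j₀:ℝ)) 0 with hrdef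
    have hrm : m + 2*(j₀:ℝ) ≤ r := le_max_left _ _
    set S : Set (Fin n → ℤ) := {ξ | l2normSq ξ ≤ (j₀:ℝ)} with hSdef
    have hSfin : S.Finite := finite_low _
    refine summable_off
      (fun ξ => mul_nonneg (Real.rpow_nonneg (base_pos ξ).le _) (sq_nonneg _))
      (fun ξ => mul_nonneg (Real.rpow_nonneg (base_pos ξ).le _) (sq_nonneg _))
      hSfin (fun ξ hξ => ?_) hsob
    simp only [hSdef, Set.mem_setOf_eq, not_le] at hξ
    have hlow : (1 + l2normSq ξ) ^ (-(j₀:ℝ)) ≤ ‖p ξ‖ := hj₀ ξ hξ.le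
    have ha0 : (0:ℝ) < 1 + l2normSq ξ := base_pos ξ
    have h1 : (1 + l2normSq ξ) ^ (k + m - r) ≤ (1 + l2normSq ξ) ^ (k - 2*(j₀:ℝ)) :=
      Real.rpow_le_rpow_of_exponent_le (one_le_base ξ) (by linarith)
    have h2 : (1 + l2normSq ξ) ^ (-(2*(j₀:ℝ))) ≤ ‖p ξ‖ ^ 2 := by
      have hsq := pow_le_pow_left₀ (Real.rpow_nonneg ha0.le _) hlow 2
      refine le_trans (le_of_eq ?_) hsq
      rw [← Real.rpow_natCast ((1 + l2normSq ξ) ^ (-(j₀:ℝ))) 2, ← Real.rpow_mul ha0.le]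
      congr 1
      push_cast
      ring
    calc (1 + l2normSq ξ) ^ (k + m - r) * ‖u ξ‖ ^ 2
        ≤ (1 + l2normSq ξ) ^ (k - 2*(j₀:ℝ)) * ‖u ξ‖ ^ 2 :=
          mul_le_mul_of_nonneg_right h1 (sq_nonneg _)
      _ = (1 + l2normSq ξ) ^ k * ((1 + l2normSq ξ) ^ (-(2*(j₀:ℝ))) * ‖u ξ‖ ^ 2) := by
          rw [← mul_assoc, ← Real.rpow_add ha0, sub_eq_add_neg]
      _ ≤ (1 + l2normSq ξ) ^ k * (‖p ξ‖ ^ 2 * ‖u ξ‖ ^ 2) := by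
          apply mul_le_mul_of_nonneg_left _ (Real.rpow_nonneg ha0.le _)
          exact mul_le_mul_of_nonneg_right h2 (sq_nonneg _)
      _ = (1 + l2normSq ξ) ^ k * ‖p ξ * u ξ‖ ^ 2 := by
          rw [norm_mul, mul_pow]
  · -- easy direction
    rintro ⟨r, hr0, hr⟩
    intro u hu hdecay
    apply sobolev_all_to_rapid
    intro s
    have h := hr (s - m + r) u hu (rapid_to_sobolev hdecay _)
    have he : s - m + r + m - r = s := by ring
    rwa [he] at h
end

section
/- Let n ≥ 1, m ∈ ℝ, r' > 0, and let p : ℤⁿ → ℂ be a symbol of order m. If there exists a constant K' > 0 such that 0 < |p(ξ)| ≤ K'·|ξ|^(m−r') for infinitely many ξ ∈ ℤⁿ \ {0}, then p(D) is not GS-r for any r with 0 ≤ r < r'. -/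
open scoped BigOperators

lemma sq_le_l2 {n : ℕ} (ξ : Fin n → ℤ) (j : Fin n) : ((ξ j : ℝ)) ^ 2 ≤ l2normSq ξ := by
  unfold l2normSq
  exact Finset.single_le_sum (fun i _ => sq_nonneg ((ξ i : ℝ))) (Finset.mem_univ j)

lemma abs_le_l1 {n : ℕ} (ξ : Fin n → ℤ) (j : Fin n) : |(ξ j : ℝ)| ≤ l1norm ξ := by
  unfold l1norm
  exact Finset.single_le_sum (fun i _ => abs_nonneg ((ξ i : ℝ))) (Finset.mem_univ j)

lemma l2_sublevel_finite {n : ℕ} (R : ℝ) : {ξ : Fin n → ℤ | l2normSq ξ ≤ R}.Finite := by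
  have hsub : {ξ : Fin n → ℤ | l2normSq ξ ≤ R} ⊆
      Set.univ.pi (fun _ : Fin n => {z : ℤ | (z : ℝ) ^ 2 ≤ R}) := by
    intro ξ hξ j _
    exact le_trans (sq_le_l2 ξ j) hξ
  refine Set.Finite.subset (Set.Finite.pi fun j => ?_) hsub
  refine Set.Finite.subset (Set.finite_Icc (-⌈Real.sqrt R⌉) ⌈Real.sqrt R⌉) ?_
  intro z hz
  have hz' : |(z : ℝ)| ≤ Real.sqrt R := Real.abs_le_sqrt hz
  have h2 : |(z : ℝ)| ≤ (⌈Real.sqrt R⌉ : ℝ) := le_trans hz' (Int.le_ceil _)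
  have h3 : |z| ≤ ⌈Real.sqrt R⌉ := by exact_mod_cast (by push_cast; exact h2 : (|z| : ℝ) ≤ (⌈Real.sqrt R⌉ : ℝ))
  exact Set.mem_Icc.2 (abs_le.mp h3)

lemma one_le_l1norm {n : ℕ} {ξ : Fin n → ℤ} (h : ξ ≠ 0) : 1 ≤ l1norm ξ := by
  obtain ⟨j, hj⟩ : ∃ j, ξ j ≠ 0 := by
    by_contra hc; push_neg at hc; exact h (funext hc)
  have h1 : (1 : ℤ) ≤ |ξ j| := Int.one_le_abs hj
  have h2 : (1 : ℝ) ≤ |(ξ j : ℝ)| := by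
    rw [← Int.cast_abs]; exact_mod_cast h1
  exact le_trans h2 (abs_le_l1 ξ j)

lemma one_le_l2normSq {n : ℕ} {ξ : Fin n → ℤ} (h : ξ ≠ 0) : 1 ≤ l2normSq ξ := by
  obtain ⟨j, hj⟩ : ∃ j, ξ j ≠ 0 := by
    by_contra hc; push_neg at hc; exact h (funext hc)
  have h0 : (1 : ℤ) ≤ |ξ j| := Int.one_le_abs hj
  have h1 : (1 : ℤ) ≤ (ξ j) ^ 2 := by nlinarith [sq_abs (ξ j)]
  have h2 : (1 : ℝ) ≤ ((ξ j : ℝ)) ^ 2 := by exact_mod_cast h1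
  exact le_trans h2 (sq_le_l2 ξ j)

lemma l2_le_l1_sq {n : ℕ} (ξ : Fin n → ℤ) : l2normSq ξ ≤ (l1norm ξ) ^ 2 := by
  have hLnn : 0 ≤ l1norm ξ := by
    unfold l1norm; exact Finset.sum_nonneg fun i _ => abs_nonneg _
  have h1 : l2normSq ξ ≤ ∑ i, |(ξ i : ℝ)| * l1norm ξ := by
    unfold l2normSq
    refine Finset.sum_le_sum fun i _ => ?_
    rw [← sq_abs, sq]
    exact mul_le_mul_of_nonneg_left (abs_le_l1 ξ i) (abs_nonneg _)
  calc l2normSq ξ ≤ ∑ i, |(ξ i : ℝ)| * l1norm ξ := h1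
    _ = l1norm ξ * l1norm ξ := by rw [← Finset.sum_mul]; rfl
    _ = (l1norm ξ) ^ 2 := (sq (l1norm ξ)).symm

lemma l1_le_n_sqrt {n : ℕ} (ξ : Fin n → ℤ) : l1norm ξ ≤ n * Real.sqrt (1 + l2normSq ξ) := by
  have h1 : ∀ i : Fin n, |(ξ i : ℝ)| ≤ Real.sqrt (1 + l2normSq ξ) := by
    intro i
    rw [← Real.sqrt_sq_eq_abs]
    refine Real.sqrt_le_sqrt ?_
    have := sq_le_l2 ξ i
    linarith
  calc l1norm ξ ≤ ∑ _i : Fin n, Real.sqrt (1 + l2normSq ξ) := by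
        unfold l1norm; exact Finset.sum_le_sum fun i _ => h1 i
    _ = n * Real.sqrt (1 + l2normSq ξ) := by
        rw [Finset.sum_const, Finset.card_univ, Fintype.card_fin, nsmul_eq_mul]

lemma l1_rpow_bound {n : ℕ} (hn : 1 ≤ n) (t : ℝ) {ξ : Fin n → ℤ} (hξ : ξ ≠ 0) :
    l1norm ξ ^ t ≤ ((2:ℝ) ^ (-(t/2)) + (n:ℝ) ^ t) * (1 + l2normSq ξ) ^ (t/2) := by
  set L := l1norm ξ with hLdef
  set M := 1 + l2normSq ξ with hMdef
  have hL1 : 1 ≤ L := one_le_l1norm hξ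
  have hLpos : 0 < L := lt_of_lt_of_le one_pos hL1
  have hN1 : 1 ≤ l2normSq ξ := one_le_l2normSq hξ
  have hMpos : 0 < M := by simp only [hMdef]; linarith
  have hnpos : (0:ℝ) < n := by exact_mod_cast hn
  have hA : (0:ℝ) < (2:ℝ) ^ (-(t/2)) := Real.rpow_pos_of_pos two_pos _
  have hB : (0:ℝ) < (n:ℝ) ^ t := Real.rpow_pos_of_pos hnpos _
  have hMt : (0:ℝ) < M ^ (t/2) := Real.rpow_pos_of_pos hMpos _
  rcases le_total 0 t with ht | ht
  · have hLle : L ≤ (n:ℝ) * Real.sqrt M := l1_le_n_sqrt ξ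
    have h1 : L ^ t ≤ ((n:ℝ) * Real.sqrt M) ^ t :=
      Real.rpow_le_rpow (le_of_lt hLpos) hLle ht
    have h2 : ((n:ℝ) * Real.sqrt M) ^ t = (n:ℝ) ^ t * (Real.sqrt M) ^ t :=
      Real.mul_rpow (le_of_lt hnpos) (Real.sqrt_nonneg _)
    have h3 : (Real.sqrt M) ^ t = M ^ (t/2) := by
      rw [Real.sqrt_eq_rpow, ← Real.rpow_mul (le_of_lt hMpos), one_div_mul_eq_div]
    calc L ^ t ≤ (n:ℝ) ^ t * M ^ (t/2) := by rw [← h3, ← h2]; exact h1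
      _ ≤ ((2:ℝ) ^ (-(t/2)) + (n:ℝ) ^ t) * M ^ (t/2) := by nlinarith
  · have hM2 : M / 2 ≤ L ^ 2 := by
      have := l2_le_l1_sq ξ
      simp only [hMdef, hLdef] at *
      linarith
    have hsle : Real.sqrt (M/2) ≤ L := by
      rw [show L = Real.sqrt (L^2) by rw [Real.sqrt_sq (le_of_lt hLpos)]]
      exact Real.sqrt_le_sqrt hM2
    have hspos : 0 < Real.sqrt (M/2) := Real.sqrt_pos.2 (by linarith)
    have h1 : L ^ t ≤ (Real.sqrt (M/2)) ^ t :=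
      Real.rpow_le_rpow_of_nonpos hspos hsle ht
    have h2 : (Real.sqrt (M/2)) ^ t = (M/2) ^ (t/2) := by
      rw [Real.sqrt_eq_rpow, ← Real.rpow_mul (by positivity : (0:ℝ) ≤ M/2), one_div_mul_eq_div]
    have h3 : (M/2) ^ (t/2) = M ^ (t/2) * (2:ℝ) ^ (-(t/2)) := by
      rw [Real.div_rpow (le_of_lt hMpos) (by norm_num), Real.rpow_neg (by norm_num), div_eq_mul_inv]
    calc L ^ t ≤ M ^ (t/2) * (2:ℝ) ^ (-(t/2)) := by rw [← h3, ← h2]; exact h1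
      _ ≤ ((2:ℝ) ^ (-(t/2)) + (n:ℝ) ^ t) * M ^ (t/2) := by nlinarith

lemma exists_seq_aux {α : Type*} (S : Set α) (v : α → ℝ)
    (H : ∀ R : ℝ, ∃ x, x ∈ S ∧ R < v x) (B : ℕ → ℝ) :
    ∃ g : ℕ → α, (∀ j, g j ∈ S) ∧ (∀ j, B j < v (g j)) ∧ StrictMono (v ∘ g) := by
  choose F h1 h2 using H
  refine ⟨fun j => Nat.rec (F (B 0)) (fun j prev => F (max (B (j+1)) (v prev))) j, ?_, ?_, ?_⟩
  · intro j; cases j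
    · exact h1 _
    · exact h1 _
  · intro j; cases j
    · exact h2 _
    · exact lt_of_le_of_lt (le_max_left _ _) (h2 _)
  · apply strictMono_nat_of_lt_succ
    intro j
    exact lt_of_le_of_lt (le_max_right _ _) (h2 _)


theorem stmt_9 {n : ℕ} (hn : 1 ≤ n) (m r' : ℝ) (hr' : 0 < r')
    (p : (Fin n → ℤ) → ℂ) (hp : SymbolOrder m p)
    (K' : ℝ) (hK' : 0 < K')
    (hinf : {ξ : Fin n → ℤ | ξ ≠ 0 ∧ 0 < ‖p ξ‖ ∧
        ‖p ξ‖ ≤ K' * l1norm ξ ^ (m - r')}.Infinite) :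
    ∀ r : ℝ, 0 ≤ r → r < r' → ¬ GSr m r p := by
  intro r hr0 hrr' hGS
  have hub : ∀ R : ℝ, ∃ ξ, ξ ∈ {ξ : Fin n → ℤ | ξ ≠ 0 ∧ 0 < ‖p ξ‖ ∧
      ‖p ξ‖ ≤ K' * l1norm ξ ^ (m - r')} ∧ R < l2normSq ξ := by
    intro R
    by_contra hcon
    push_neg at hcon
    exact hinf (Set.Finite.subset (l2_sublevel_finite R) hcon)
  have hnpos : (0:ℝ) < n := by exact_mod_cast hn
  set t := m - r' with ht
  set D : ℝ := (2:ℝ) ^ (-(t/2)) + (n:ℝ) ^ t with hD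
  have hDpos : 0 < D := add_pos (Real.rpow_pos_of_pos two_pos _) (Real.rpow_pos_of_pos hnpos _)
  set E : ℝ := (K' * D) ^ 2 with hE
  have hEpos : 0 < E := by positivity
  have hrr : 0 < r' - r := by linarith
  set B : ℕ → ℝ := fun j => ((4:ℝ) ^ j * E) ^ (1/(r'-r)) with hB
  obtain ⟨g, hgS, hgB, hgmono⟩ := exists_seq_aux _ l2normSq hub B
  have hginj : Function.Injective g := fun a b hab => hgmono.injective (by simp [Function.comp, hab])
  set f : (Fin n → ℤ) → ℂ := Function.extend g (fun j => ((((1:ℝ)/2) ^ j : ℝ) : ℂ)) 0 with hf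
  have hfg : ∀ j, f (g j) = ((((1:ℝ)/2) ^ j : ℝ) : ℂ) := fun j => hginj.extend_apply _ _ j
  have hfnot : ∀ ξ, ξ ∉ Set.range g → f ξ = 0 := by
    intro ξ h
    have hne : ¬ ∃ j, g j = ξ := by simpa [Set.mem_range] using h
    simp [hf, Function.extend_apply' _ _ _ hne]
  have hppos : ∀ j, 0 < ‖p (g j)‖ := fun j => (hgS j).2.1
  have hfsum : Summable fun ξ => ‖f ξ‖ ^ 2 := by
    rw [← Function.Injective.summable_iff hginj (fun ξ hξ => by rw [hfnot ξ hξ]; simp)]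
    have heq : ((fun ξ => ‖f ξ‖ ^ 2) ∘ g) = fun j => ((1:ℝ)/4) ^ j := by
      funext j
      simp only [Function.comp_apply, hfg j, Complex.norm_real, Real.norm_eq_abs]
      rw [abs_of_nonneg (by positivity), show ((1:ℝ)/4) = ((1:ℝ)/2)^2 by norm_num,
        ← pow_mul, ← pow_mul, Nat.mul_comm]
    rw [heq]
    exact summable_geometric_of_lt_one (by norm_num) (by norm_num)
  have hfS : InSobolev 0 f := by
    unfold InSobolev
    refine hfsum.congr fun ξ => ?_
    rw [Real.rpow_zero, one_mul]
  have hf0 : ∀ ξ, p ξ = 0 → f ξ = 0 := by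
    intro ξ h0
    apply hfnot
    rintro ⟨j, rfl⟩
    have h1 := hppos j
    rw [h0] at h1
    simp at h1
  obtain ⟨u, huS, hpu⟩ := hGS 0 f hfS hf0
  have key : ∀ j, (1:ℝ) ≤ (1 + l2normSq (g j)) ^ ((0:ℝ) + m - r) * ‖u (g j)‖ ^ 2 := by
    intro j
    have hξS := hgS j
    have hξ0 : g j ≠ 0 := hξS.1
    have ha : 0 < ‖p (g j)‖ := hξS.2.1
    set a := ‖p (g j)‖ with hadef
    set M := 1 + l2normSq (g j) with hMdef
    have hN1 : 1 ≤ l2normSq (g j) := one_le_l2normSq hξ0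
    have hMpos : (0:ℝ) < M := by rw [hMdef]; linarith
    have hM0 : (0:ℝ) ≤ M := le_of_lt hMpos
    have hMt : (0:ℝ) < M ^ (t/2) := Real.rpow_pos_of_pos hMpos _
    have hMtt : (0:ℝ) < M ^ t := Real.rpow_pos_of_pos hMpos _
    have hbound : a ≤ K' * (D * M ^ (t/2)) := by
      calc a ≤ K' * l1norm (g j) ^ t := hξS.2.2
        _ ≤ K' * (D * M ^ (t/2)) := by
            refine mul_le_mul_of_nonneg_left ?_ (le_of_lt hK')
            exact l1_rpow_bound hn t hξ0
    have hgrow : (4:ℝ)^j * E ≤ M ^ (r'-r) := by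
      have hBM : B j ≤ M := by
        have h1 := hgB j
        rw [hMdef]
        linarith
      have h0 : (0:ℝ) ≤ (4:ℝ)^j * E := by positivity
      calc (4:ℝ)^j * E = (((4:ℝ)^j * E) ^ ((1:ℝ)/(r'-r))) ^ (r'-r) := by
            rw [← Real.rpow_mul h0, one_div_mul_cancel (ne_of_gt hrr), Real.rpow_one]
        _ ≤ M ^ (r'-r) := Real.rpow_le_rpow (Real.rpow_nonneg h0 _) hBM (le_of_lt hrr)
    have hu : ‖u (g j)‖ = ((1:ℝ)/2)^j / a := by
      have habs : a * ‖u (g j)‖ = ((1:ℝ)/2)^j := by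
        rw [hadef, ← norm_mul, hpu (g j), hfg j, Complex.norm_real, Real.norm_eq_abs,
          abs_of_nonneg (by positivity)]
      rw [eq_div_iff (ne_of_gt ha), mul_comm]
      exact habs
    have hsq : (M ^ (t/2)) ^ (2:ℕ) = M ^ t := by
      rw [← Real.rpow_natCast (M ^ (t/2)) 2, ← Real.rpow_mul hM0]
      congr 1
      push_cast
      ring
    have ha2 : a ^ 2 ≤ E * M ^ t := by
      calc a ^ 2 ≤ (K' * (D * M ^ (t/2))) ^ 2 := by
            exact pow_le_pow_left₀ (le_of_lt ha) hbound 2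
        _ = E * M ^ t := by rw [hE, ← hsq]; ring
    have hsplit : M ^ ((0:ℝ) + m - r) = M ^ (r'-r) * M ^ t := by
      rw [← Real.rpow_add hMpos]
      congr 1
      rw [ht]
      ring
    have half_sq : (((1:ℝ)/2)^j) ^ (2:ℕ) = ((1:ℝ)/4)^j := by
      rw [show ((1:ℝ)/4) = ((1:ℝ)/2)^2 by norm_num, ← pow_mul, ← pow_mul, Nat.mul_comm]
    rw [hsplit, hu, div_pow, half_sq,
      show M ^ (r'-r) * M ^ t * (((1:ℝ)/4)^j / a^2) = (M ^ (r'-r) * M ^ t * ((1:ℝ)/4)^j) / a^2 by ring,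
      le_div_iff₀ (pow_pos ha 2), one_mul]
    have h4 : ((4:ℝ)^j) * ((1:ℝ)/4)^j = 1 := by
      rw [← mul_pow]
      norm_num
    nlinarith [h4, mul_le_mul_of_nonneg_right hgrow (pow_nonneg (by norm_num : (0:ℝ) ≤ 1/4) j),
      mul_le_mul_of_nonneg_right ha2 (le_of_lt hMtt), hgrow, ha2, hMtt.le,
      mul_pos hMtt (pow_pos (by norm_num : (0:ℝ) < 1/4) j)]
  have hcomp : Summable ((fun ξ => (1 + l2normSq ξ) ^ ((0:ℝ) + m - r) * ‖u ξ‖ ^ 2) ∘ g) :=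
    Summable.comp_injective huS hginj
  have htend := hcomp.tendsto_atTop_zero
  have hev : ∀ᶠ j in Filter.atTop,
      ((fun ξ => (1 + l2normSq ξ) ^ ((0:ℝ) + m - r) * ‖u ξ‖ ^ 2) ∘ g) j < 1 :=
    htend.eventually (gt_mem_nhds one_pos)
  obtain ⟨j, hj⟩ := hev.exists
  exact absurd (key j) (not_le.2 hj)
end
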